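/- Let G be a place graph obtained as the composition G = A ∘ B, where A: k → n and B: m → k are place graphs sharing no entities, and the parent map of G agrees with that of B on V_B (with children of B's regions attached per composition) and with that of A on V_A. Then any descendant of an entity of B is itself an entity of B; that is, if u ∈ V_B, v ∈ V_G, and u is in the transitive closure of the parent map applied to v (u = prnt_G^+(v)), then v ∈ V_B. -/

import Mathlib

/-- A concrete place graph `B : m → n` with entity set `V`, `m` sites, `n` regions,
a parent map on entities (`prntE`) and on sites (`prntS`). -/
structure PlaceGraph (α : Type) where
  V : Finset α
  m : ℕ
  n : ℕ
  prntE : α → α ⊕ ℕ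
  prntS : ℕ → α ⊕ ℕ

namespace PlaceGraph

/-- Well-formedness: parents of entities/sites are entities of the graph or regions `< n`. -/
def WF {α : Type} (G : PlaceGraph α) : Prop :=
  (∀ v ∈ G.V, (∀ u, G.prntE v = .inl u → u ∈ G.V) ∧ (∀ j, G.prntE v = .inr j → j < G.n)) ∧
  (∀ s, s < G.m → (∀ u, G.prntS s = .inl u → u ∈ G.V) ∧ (∀ j, G.prntS s = .inr j → j < G.n))

/-- Composition `A ∘ B` of place graphs `A : k → n` and `B : m → k`:
`B`'s regions are identified with `A`'s sites. -/
def comp {α : Type} [DecidableEq α] (A B : PlaceGraph α) : PlaceGraph α where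
  V := A.V ∪ B.V
  m := B.m
  n := A.n
  prntE := fun v =>
    if v ∈ B.V then
      match B.prntE v with
      | .inl u => .inl u
      | .inr j => A.prntS j
    else A.prntE v
  prntS := fun s =>
    match B.prntS s with
    | .inl u => .inl u
    | .inr j => A.prntS j

/-- `step G v u`: the entity `u` is the parent of the entity `v` in `G`. -/
def step {α : Type} (G : PlaceGraph α) (v u : α) : Prop :=
  v ∈ G.V ∧ u ∈ G.V ∧ G.prntE v = .inl u

/-- `Anc G u v`: the entity `u` is a (strict) ancestor of the entity `v` in `G`,
i.e. `u ∈ prnt_G⁺(v)`. -/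
def Anc {α : Type} (G : PlaceGraph α) (u v : α) : Prop :=
  Relation.TransGen (step G) v u

end PlaceGraph

/-- In a composition `G = A ∘ B` of place graphs `A : k → n` and
`B : m → k` (sharing no entities), any descendant of an entity of `B` is itself an
entity of `B`: if `u ∈ V_B`, `v ∈ V_G` and `u ∈ prnt_G⁺(v)`, then `v ∈ V_B`. -/
theorem descendant_of_inner_entity_mem_inner {α : Type} [DecidableEq α]
    (A B : PlaceGraph α) (hWA : A.WF) (hWB : B.WF)
    (hIface : B.n = A.m) (hdisj : Disjoint A.V B.V)
    (u v : α) (hu : u ∈ B.V) (hv : v ∈ (A.comp B).V)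
    (hanc : PlaceGraph.Anc (A.comp B) u v) :
    v ∈ B.V := by
  have key : ∀ x y : α, PlaceGraph.step (A.comp B) x y → y ∈ B.V → x ∈ B.V := by
    intro x y hstep hy
    by_contra hx
    have hxA : x ∈ A.V := by
      rcases Finset.mem_union.mp hstep.1 with h | h
      · exact h
      · exact absurd h hx
    have hpx : (A.comp B).prntE x = A.prntE x := by
      simp [PlaceGraph.comp, hx]
    have : A.prntE x = .inl y := by rw [← hpx]; exact hstep.2.2
    have hyA : y ∈ A.V := (hWA.1 x hxA).1 y this
    exact (Finset.disjoint_left.mp hdisj hyA) hy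
  clear hv
  induction hanc using Relation.TransGen.head_induction_on with
  | single h => exact key _ _ h hu
  | head h _ ih => exact key _ _ h ih
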